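/- For any a > 0 and c ∈ ℝ, the Sturm-Liouville operator L_c[f](x) = -(d/dx)(x·(d/dx)f) + x(x+c)f applied to the scaled Laguerre function h_k^a satisfies: L_c[h_k^a] = (1/(4a²))·(4k(k-1)·h_{k-2}^a + k(a³-4ac-16k)·h_{k-1}^a + (8+a³+4ac+24k+2a³k+8ack+24k²)·h_k^a + (k+1)(a³-4ac-16(k+1))·h_{k+1}^a + 4(k+1)(k+2)·h_{k+2}^a), where negative-index terms vanish. -/

import Mathlib

/-- The Laguerre polynomials, defined by the three-term recurrence
`L_{k+1}(x) = ((2k+1-x)L_k(x) - k L_{k-1}(x))/(k+1)`, `L_0 = 1`, `L_1 = 1 - x`. -/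
noncomputable def laguerre : ℕ → ℝ → ℝ
  | 0, _ => 1
  | 1, x => 1 - x
  | (n + 2), x =>
      ((2 * (n : ℝ) + 3 - x) * laguerre (n + 1) x - ((n : ℝ) + 1) * laguerre n x)
        / ((n : ℝ) + 2)

/-- The scaled Laguerre functions `h_n^a(x) = √a · e^{-ax/2} · L_n(ax)`. -/
noncomputable def scaledLaguerre (a : ℝ) (n : ℕ) (x : ℝ) : ℝ :=
  Real.sqrt a * Real.exp (-a * x / 2) * laguerre n (a * x)

/-- The Sturm–Liouville operator `L_c[f](x) = -(d/dx)(x·(d/dx)f) + x(x+c)f`. -/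
noncomputable def sturmLiouvilleAiry (c : ℝ) (f : ℝ → ℝ) (x : ℝ) : ℝ :=
  -(deriv (fun t => t * deriv f t) x) + x * (x + c) * f x

open Polynomial

noncomputable def lagP : ℕ → Polynomial ℝ
  | 0 => 1
  | 1 => 1 - X
  | (n + 2) => C (((n:ℝ) + 2)⁻¹) *
      ((C (2*(n:ℝ)+3) - X) * lagP (n+1) - C ((n:ℝ)+1) * lagP n)

lemma laguerre_eq_eval : ∀ (n : ℕ) (x : ℝ), laguerre n x = (lagP n).eval x := by
  intro n
  induction n using Nat.twoStepInduction with
  | zero => intro x; simp [laguerre, lagP]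
  | one => intro x; simp [laguerre, lagP]
  | more n ih1 ih2 =>
    intro x
    have h2 : ((n:ℝ) + 2) ≠ 0 := by positivity
    simp only [laguerre, lagP, ih1, ih2, eval_mul, eval_sub, eval_C, eval_X, eval_one]
    field_simp

lemma recurEval (n : ℕ) (y : ℝ) :
    ((n:ℝ)+2) * (lagP (n+2)).eval y
      = (2*(n:ℝ)+3 - y) * (lagP (n+1)).eval y - ((n:ℝ)+1) * (lagP n).eval y := by
  have h2 : ((n:ℝ) + 2) ≠ 0 := by positivity
  simp only [lagP, eval_mul, eval_sub, eval_C, eval_X]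
  field_simp

lemma lagM (n : ℕ) (y : ℝ) :
    y * (lagP n).eval y
      = (2*(n:ℝ)+1) * (lagP n).eval y - (n:ℝ) * (lagP (n-1)).eval y
        - ((n:ℝ)+1) * (lagP (n+1)).eval y := by
  cases n with
  | zero => simp [lagP]
  | succ m =>
    have h := recurEval m y
    simp only [Nat.add_sub_cancel]
    push_cast
    linear_combination h

lemma lagD1D2 : ∀ n : ℕ,
    (∀ y : ℝ, (derivative (lagP (n+1))).eval y
        = (derivative (lagP n)).eval y - (lagP n).eval y)
    ∧ (∀ y : ℝ, y * (derivative (lagP (n+1))).eval y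
        = ((n:ℝ)+1) * (lagP (n+1)).eval y - ((n:ℝ)+1) * (lagP n).eval y) := by
  intro n
  induction n with
  | zero =>
    constructor <;> intro y <;>
      simp [lagP, derivative_sub, derivative_one, derivative_X]
  | succ m ih =>
    obtain ⟨ih1, ih2⟩ := ih
    have hm2 : ((m:ℝ)+2) ≠ 0 := by positivity
    have hd : ∀ y : ℝ, ((m:ℝ)+2) * (derivative (lagP (m+2))).eval y
        = (2*(m:ℝ)+3 - y) * (derivative (lagP (m+1))).eval y
          - (lagP (m+1)).eval y - ((m:ℝ)+1) * (derivative (lagP m)).eval y := by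
      intro y
      conv_lhs => rw [show lagP (m+2) = C (((m:ℝ) + 2)⁻¹) *
        ((C (2*(m:ℝ)+3) - X) * lagP (m+1) - C ((m:ℝ)+1) * lagP m) from rfl]
      simp only [derivative_mul, derivative_sub, derivative_C, derivative_X,
        eval_mul, eval_sub, eval_add, eval_C, eval_X, eval_one, eval_zero,
        zero_mul, one_mul, zero_sub, mul_one, eval_neg]
      field_simp
      ring
    have d1 : ∀ y : ℝ, (derivative (lagP (m+2))).eval y
        = (derivative (lagP (m+1))).eval y - (lagP (m+1)).eval y := by
      intro y
      have key : ((m:ℝ)+2) * (derivative (lagP (m+2))).eval y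
          = ((m:ℝ)+2) * ((derivative (lagP (m+1))).eval y - (lagP (m+1)).eval y) := by
        have h1 := ih1 y; have h2 := ih2 y
        linear_combination hd y + ((m:ℝ)+1) * h1 - h2
      exact mul_left_cancel₀ hm2 key
    refine ⟨d1, ?_⟩
    intro y
    rw [d1 y]
    have h2 := ih2 y
    have hr := recurEval m y
    push_cast
    linear_combination h2 - hr

lemma lagD2all (n : ℕ) (y : ℝ) :
    y * (derivative (lagP n)).eval y
      = (n:ℝ) * (lagP n).eval y - (n:ℝ) * (lagP (n-1)).eval y := by
  cases n with
  | zero => simp [lagP]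
  | succ m =>
    have h := (lagD1D2 m).2 y
    simp only [Nat.add_sub_cancel]
    push_cast
    linear_combination h

lemma lagH (n : ℕ) (y : ℝ) :
    (n:ℝ) * (derivative (lagP (n-1))).eval y
      = (n:ℝ) * ((derivative (lagP n)).eval y + (lagP (n-1)).eval y) := by
  cases n with
  | zero => simp
  | succ m =>
    have h := (lagD1D2 m).1 y
    simp only [Nat.add_sub_cancel]
    push_cast
    linear_combination (-((m:ℝ)+1)) * h

lemma lagM2 (n : ℕ) (y : ℝ) :
    (n:ℝ) * (y * (lagP (n-1)).eval y)
      = (n:ℝ) * ((2*(n:ℝ)-1) * (lagP (n-1)).eval y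
          - ((n:ℝ)-1) * (lagP (n-2)).eval y - (n:ℝ) * (lagP n).eval y) := by
  cases n with
  | zero => simp
  | succ m =>
    have h := lagM m y
    simp only [Nat.add_sub_cancel, Nat.succ_sub_succ, Nat.sub_zero]
    push_cast
    linear_combination ((m:ℝ)+1) * h

lemma hasDerivAt_scaledLaguerre (a : ℝ) (n : ℕ) (x : ℝ) :
    HasDerivAt (scaledLaguerre a n)
      (Real.sqrt a * Real.exp (-a*x/2) *
        (a * (derivative (lagP n)).eval (a*x) - a/2 * (lagP n).eval (a*x))) x := by
  have hfun : scaledLaguerre a n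
      = fun t => Real.sqrt a * (Real.exp (-a*t/2) * (lagP n).eval (a*t)) := by
    funext t; rw [scaledLaguerre, laguerre_eq_eval]; ring
  rw [hfun]
  have h1 : HasDerivAt (fun t:ℝ => -a*t/2) (-a/2) x := by
    simpa using ((hasDerivAt_id x).const_mul (-a)).div_const 2
  have h2 : HasDerivAt (fun t => Real.exp (-a*t/2))
      (Real.exp (-a*x/2) * (-a/2)) x := h1.exp
  have hg : HasDerivAt (fun t : ℝ => a*t) a x := by
    simpa using (hasDerivAt_id x).const_mul a
  have h3 : HasDerivAt (fun t => (lagP n).eval (a*t))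
      ((derivative (lagP n)).eval (a*x) * a) x :=
    (Polynomial.hasDerivAt (lagP n) (a*x)).comp x hg
  have h4 := (h2.mul h3).const_mul (Real.sqrt a)
  exact h4.congr_deriv (by ring)

lemma tmul_deriv (a : ℝ) (n : ℕ) (t : ℝ) :
    t * deriv (scaledLaguerre a n) t
      = ((n:ℝ)+1)/2 * scaledLaguerre a (n+1) t - 1/2 * scaledLaguerre a n t
        - (n:ℝ)/2 * scaledLaguerre a (n-1) t := by
  rw [(hasDerivAt_scaledLaguerre a n t).deriv]
  have hM := lagM n (a*t)
  have hD := lagD2all n (a*t)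
  simp only [scaledLaguerre, laguerre_eq_eval]
  linear_combination (Real.sqrt a * Real.exp (-a*t/2)) * hD
    - (Real.sqrt a * Real.exp (-a*t/2)/2) * hM


/-- for `a > 0`, `c ∈ ℝ` and `k : ℕ`, the Sturm–Liouville operator `L_c`
applied to the scaled Laguerre function `h_k^a` satisfies
`L_c[h_k^a] = (1/(4a²))·(4k(k-1)·h_{k-2}^a + k(a³-4ac-16k)·h_{k-1}^a
  + (8+a³+4ac+24k+2a³k+8ack+24k²)·h_k^a + (k+1)(a³-4ac-16(k+1))·h_{k+1}^a
  + 4(k+1)(k+2)·h_{k+2}^a)`, where negative-index terms vanish (zero coefficients). -/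
theorem sturmLiouville_scaledLaguerre (a c : ℝ) (ha : 0 < a) (k : ℕ) :
    ∀ x ∈ Set.Ici (0:ℝ),
      sturmLiouvilleAiry c (scaledLaguerre a k) x
        = (1 / (4 * a ^ 2)) * (4 * (k : ℝ) * ((k : ℝ) - 1) * scaledLaguerre a (k - 2) x
            + (k : ℝ) * (a ^ 3 - 4 * a * c - 16 * (k : ℝ)) * scaledLaguerre a (k - 1) x
            + (8 + a ^ 3 + 4 * a * c + 24 * (k : ℝ) + 2 * a ^ 3 * (k : ℝ)
                + 8 * a * c * (k : ℝ) + 24 * (k : ℝ) ^ 2) * scaledLaguerre a k x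
            + ((k : ℝ) + 1) * (a ^ 3 - 4 * a * c - 16 * ((k : ℝ) + 1))
                * scaledLaguerre a (k + 1) x
            + 4 * ((k : ℝ) + 1) * ((k : ℝ) + 2) * scaledLaguerre a (k + 2) x) := by
  intro x _
  have hfun : (fun t => t * deriv (scaledLaguerre a k) t)
      = (fun t => ((k:ℝ)+1)/2 * scaledLaguerre a (k+1) t
          - 1/2 * scaledLaguerre a k t - (k:ℝ)/2 * scaledLaguerre a (k-1) t) :=
    funext (tmul_deriv a k)
  have hd : HasDerivAt (fun t => ((k:ℝ)+1)/2 * scaledLaguerre a (k+1) t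
        - 1/2 * scaledLaguerre a k t - (k:ℝ)/2 * scaledLaguerre a (k-1) t)
      ( ((k:ℝ)+1)/2 * (Real.sqrt a * Real.exp (-a*x/2) *
          (a * (derivative (lagP (k+1))).eval (a*x) - a/2 * (lagP (k+1)).eval (a*x)))
        - 1/2 * (Real.sqrt a * Real.exp (-a*x/2) *
          (a * (derivative (lagP k)).eval (a*x) - a/2 * (lagP k).eval (a*x)))
        - (k:ℝ)/2 * (Real.sqrt a * Real.exp (-a*x/2) *
          (a * (derivative (lagP (k-1))).eval (a*x) - a/2 * (lagP (k-1)).eval (a*x))) ) x :=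
    (((hasDerivAt_scaledLaguerre a (k+1) x).const_mul _).sub
      ((hasDerivAt_scaledLaguerre a k x).const_mul _)).sub
      ((hasDerivAt_scaledLaguerre a (k-1) x).const_mul _)
  simp only [sturmLiouvilleAiry]
  rw [hfun, hd.deriv]
  conv_rhs => rw [one_div_mul_eq_div]
  rw [eq_div_iff (by positivity : (4:ℝ)*a^2 ≠ 0)]
  simp only [scaledLaguerre, laguerre_eq_eval]
  have h1 := (lagD1D2 k).1 (a*x)
  have h2 := lagH k (a*x)
  have h3 := lagM k (a*x)
  have h4 := lagM (k+1) (a*x)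
  have h5 := lagM2 k (a*x)
  simp only [Nat.add_sub_cancel] at h4
  push_cast at h4
  set s := Real.sqrt a * Real.exp (-a*x/2) with hs
  linear_combination (-2*s*a^3*((k:ℝ)+1)) * h1 + (2*s*a^3) * h2
    + (4*s*a*x + 4*s*a*c + 4*s*(2*(k:ℝ)+1)) * h3
    + (-4*s*((k:ℝ)+1)) * h4 + (-4*s) * h5
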